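/- Any C³ solution u of u''' + a u' + u u' = 0 on ℝ with u(0) = u'(0) = u(L) = u'(L) = 0 extends to (equals) an L-periodic function, i.e. u(x + L) = u(x) for all x. -/

import Mathlib

open Set Filter Topology

/-- Any `C³` solution of `u''' + a u' + u u' = 0` on `ℝ` with
`u(0) = u'(0) = u(L) = u'(L) = 0` is `L`-periodic. -/
theorem solution_periodic (a L : ℝ) (hL : 0 < L) (u : ℝ → ℝ)
    (hu : ContDiff ℝ 3 u)
    (heq : ∀ x : ℝ,
      deriv (deriv (deriv u)) x + a * deriv u x + u x * deriv u x = 0)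
    (h0 : u 0 = 0) (h0' : deriv u 0 = 0) (hL0 : u L = 0) (hL1 : deriv u L = 0) :
    ∀ x : ℝ, u (x + L) = u x := by
  -- differentiability
  have h3 : ContDiff ℝ (2+1) u := by norm_num at hu ⊢; exact hu
  rw [contDiff_succ_iff_deriv] at h3
  have hd1 : Differentiable ℝ u := h3.1
  have h2 : ContDiff ℝ (1+1) (deriv u) := by
    have := h3.2.2; norm_num at this ⊢; exact this
  rw [contDiff_succ_iff_deriv] at h2
  have hd2 : Differentiable ℝ (deriv u) := h2.1
  have h1 : ContDiff ℝ (0+1) (deriv (deriv u)) := by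
    have := h2.2.2; norm_num at this ⊢; exact this
  rw [contDiff_succ_iff_deriv] at h1
  have hd3 : Differentiable ℝ (deriv (deriv u)) := h1.1
  -- energy: u'' + a u + u²/2 constant
  have hE : ∀ x, HasDerivAt (fun x => deriv (deriv u) x + a * u x + u x * u x / 2) 0 x := by
    intro x
    have h := ((hd3 x).hasDerivAt.add ((hd1 x).hasDerivAt.const_mul a)).add
      (((hd1 x).hasDerivAt.mul (hd1 x).hasDerivAt).div_const 2)
    have h' : HasDerivAt (fun x => deriv (deriv u) x + a * u x + u x * u x / 2)
        (deriv (deriv (deriv u)) x + a * deriv u x + (deriv u x * u x + u x * deriv u x) / 2) x := h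
    convert h' using 1
    have := heq x
    nlinarith [heq x]
  have hconst : ∀ x, deriv (deriv u) x + a * u x + u x * u x / 2
      = deriv (deriv u) 0 + a * u 0 + u 0 * u 0 / 2 := by
    intro x
    have := is_const_of_deriv_eq_zero (fun y => (hE y).differentiableAt)
      (fun y => (hE y).deriv) x 0
    exact this
  have hE2 : deriv (deriv u) L = deriv (deriv u) 0 := by
    have := hconst L
    rw [h0, hL0] at this
    linarith
  -- ODE system
  set F : ℝ × ℝ × ℝ → ℝ × ℝ × ℝ :=
    fun p => (p.2.1, p.2.2, -(a * p.2.1) - p.1 * p.2.1) with hF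
  have hFc : ContDiff ℝ 1 F := by
    apply ContDiff.prodMk
    · exact contDiff_fst.comp contDiff_snd
    apply ContDiff.prodMk
    · exact contDiff_snd.comp contDiff_snd
    · apply ContDiff.sub
      · exact (contDiff_const.mul (contDiff_fst.comp contDiff_snd)).neg
      · exact contDiff_fst.mul (contDiff_fst.comp contDiff_snd)
  set f : ℝ → ℝ × ℝ × ℝ := fun t => (u t, deriv u t, deriv (deriv u) t) with hfdef
  set g : ℝ → ℝ × ℝ × ℝ := fun t => f (t + L) with hgdef
  have hf' : ∀ t, HasDerivAt f (F (f t)) t := by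
    intro t
    have hu3 : deriv (deriv (deriv u)) t = -(a * deriv u t) - u t * deriv u t := by
      have := heq t; linarith
    exact ((hd1 t).hasDerivAt.prodMk ((hd2 t).hasDerivAt.prodMk
      (hu3 ▸ (hd3 t).hasDerivAt)))
  have hg' : ∀ t, HasDerivAt g (F (g t)) t := by
    intro t
    have := (hf' (t + L)).scomp t ((hasDerivAt_id t).add_const L)
    rw [one_smul] at this
    exact this
  have hfc : Continuous f := hd1.continuous.prodMk
    (hd2.continuous.prodMk hd3.continuous)
  have hgc : Continuous g := hfc.comp (continuous_id.add continuous_const)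
  have hinit : f 0 = g 0 := by
    simp only [hfdef, hgdef, zero_add]
    rw [h0, h0', hL0, hL1, hE2]
  -- clopen argument
  have hS : {t : ℝ | f t = g t} = univ := by
    apply IsClopen.eq_univ
    constructor
    · exact isClosed_eq hfc hgc
    · rw [isOpen_iff_mem_nhds]
      intro t₀ ht₀
      obtain ⟨K, s, hs, hlip⟩ := hFc.contDiffAt.exists_lipschitzOnWith (x := f t₀)
      have hev := ODE_solution_unique_of_eventually (v := fun _ => F)
        (s := fun _ => s) (K := K) (Filter.Eventually.of_forall fun _ => hlip)
        (f := f) (g := g) (t₀ := t₀) ?_ ?_ ht₀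
      · exact hev
      · filter_upwards [hfc.continuousAt.preimage_mem_nhds hs] with t ht
        exact ⟨hf' t, ht⟩
      · have hs' : s ∈ 𝓝 (g t₀) := ht₀ ▸ hs
        filter_upwards [hgc.continuousAt.preimage_mem_nhds hs'] with t ht
        exact ⟨hg' t, ht⟩
    · exact ⟨0, hinit⟩
  intro x
  have hx : f x = g x := by
    have : x ∈ ({t : ℝ | f t = g t}) := by rw [hS]; trivial
    exact this
  have := congrArg Prod.fst hx
  simpa [hfdef, hgdef] using this.symm
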